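/- Let G = (V,E) be a finite graph of maximum degree at most Δ which is an edge b-expander, let A > 0 satisfy (Δe)A^b < 1, let c > 0, and let p ∈ [1−A, 1]. Then the probability that the random subgraph G(p) contains a connected component whose number of vertices lies between c|V| and |V|/2 is at most (1/c) · ((Δe)A^b)^{c|V|} / (1 − (Δe)A^b). -/

import Mathlib

open Filter Topology
open scoped Classical

noncomputable section

variable {V : Type*}

/-- Probability that the random subgraph `G(p)` lies in the event `A`. -/
noncomputable def percProb [Fintype V] [DecidableEq V] (G : SimpleGraph V) [DecidableRel G.Adj]
    (p : ℝ) (A : Set (Finset (Sym2 V))) : ℝ :=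
  ∑ F ∈ G.edgeFinset.powerset,
    if F ∈ A then p ^ F.card * (1 - p) ^ (G.edgeFinset.card - F.card) else 0

/-- Number of vertices in the component of `v` in the spanning subgraph with edge set `F`. -/
noncomputable def compCard [Fintype V] (F : Finset (Sym2 V)) (v : V) : ℕ :=
  Set.ncard {w | (SimpleGraph.fromEdgeSet (↑F : Set (Sym2 V))).Reachable v w}

/-- The ball of radius `r` around `w`. -/
def ball (G : SimpleGraph V) (w : V) (r : ℕ) : Set V :=
  {v | ∃ q : G.Walk w v, q.length ≤ r}

/-- The ball of radius `r` around a set `A`. -/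
def setBall (G : SimpleGraph V) (A : Set V) (r : ℕ) : Set V :=
  {v | ∃ u ∈ A, ∃ q : G.Walk u v, q.length ≤ r}

/-- `G` is a vertex `b`-expander. -/
def VertexExpander [Fintype V] (G : SimpleGraph V) (b : ℝ) : Prop :=
  ∀ A : Finset V, 0 < A.card → (A.card : ℝ) ≤ Fintype.card V / 2 →
    b * A.card ≤ (Set.ncard {v | v ∉ A ∧ ∃ u ∈ A, G.Adj u v} : ℝ)

/-- The set of edges of `G` with exactly one endpoint in `A`. -/
def edgeBoundary (G : SimpleGraph V) (A : Set V) : Set (Sym2 V) :=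
  {e | e ∈ G.edgeSet ∧ ∃ u v : V, e = s(u, v) ∧ u ∈ A ∧ v ∉ A}

/-- `G` is an edge `b`-expander. -/
def EdgeExpander [Fintype V] (G : SimpleGraph V) (b : ℝ) : Prop :=
  ∀ A : Finset V, 0 < A.card → (A.card : ℝ) ≤ Fintype.card V / 2 →
    b * A.card ≤ ((edgeBoundary G ↑A).ncard : ℝ)

/-- `e` is an `L`-bridge for configuration `F` (largeness threshold `c * |V|`). -/
def IsLBridge [Fintype V] (G : SimpleGraph V) (c : ℝ) (F : Finset (Sym2 V)) (e : Sym2 V) : Prop :=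
  e ∈ G.edgeSet ∧ ∃ u v : V, e = s(u, v) ∧
    ¬ (SimpleGraph.fromEdgeSet (↑(F.erase e) : Set (Sym2 V))).Reachable u v ∧
    c * Fintype.card V ≤ (compCard (F.erase e) u : ℝ) ∧
    c * Fintype.card V ≤ (compCard (F.erase e) v : ℝ)

/-- `F` has more than one component with at least `s` vertices. -/
def TwoLargeComponents [Fintype V] (F : Finset (Sym2 V)) (s : ℝ) : Prop :=
  ∃ v w : V, ¬ (SimpleGraph.fromEdgeSet (↑F : Set (Sym2 V))).Reachable v w ∧
    s ≤ (compCard F v : ℝ) ∧ s ≤ (compCard F w : ℝ)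

/-- The edge-isoperimetric number (Cheeger constant) of `G`. -/
noncomputable def isoNumber [Fintype V] (G : SimpleGraph V) : ℝ :=
  sInf {x : ℝ | ∃ A : Finset V, 0 < A.card ∧ (A.card : ℝ) ≤ Fintype.card V / 2 ∧
    x = ((edgeBoundary G ↑A).ncard : ℝ) / A.card}



open Finset

lemma sum_powerset_binom {α : Type*} [DecidableEq α] (s : Finset α) (q : ℝ) :
    ∑ F ∈ s.powerset, q ^ F.card * (1 - q) ^ (s.card - F.card) = 1 := by
  have h := Finset.prod_add (fun _ : α => q) (fun _ : α => (1 - q)) s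
  simp only [add_sub_cancel, prod_const, one_pow] at h
  refine Eq.trans ?_ h.symm
  apply Finset.sum_congr rfl
  intro F hF
  rw [Finset.mem_powerset] at hF
  rw [Finset.card_sdiff_of_subset hF]

lemma sum_powerset_filter_binom {α : Type*} [DecidableEq α] (s P Q : Finset α)
    (hP : P ⊆ s) (hQ : Q ⊆ s) (hPQ : Disjoint P Q) (q : ℝ) :
    ∑ F ∈ s.powerset.filter (fun F => P ⊆ F ∧ Disjoint F Q),
      q ^ F.card * (1 - q) ^ (s.card - F.card)
      = q ^ P.card * (1 - q) ^ Q.card := by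
  set R : Finset α := s \ (P ∪ Q) with hR
  have hcards : s.card = R.card + P.card + Q.card := by
    have h1 : (P ∪ Q) ⊆ s := Finset.union_subset hP hQ
    have h2 : (P ∪ Q).card = P.card + Q.card := Finset.card_union_of_disjoint hPQ
    have h3 := Finset.card_sdiff_of_subset h1
    rw [← hR] at h3
    have h4 : (P ∪ Q).card ≤ s.card := Finset.card_le_card h1
    omega
  have key : ∑ F ∈ s.powerset.filter (fun F => P ⊆ F ∧ Disjoint F Q),
      q ^ F.card * (1 - q) ^ (s.card - F.card)
      = ∑ T ∈ R.powerset, q ^ (T.card + P.card) * (1 - q) ^ (s.card - (T.card + P.card)) := by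
    apply Finset.sum_nbij' (fun F => F \ P) (fun T => T ∪ P)
    · intro F hF
      simp only [Finset.mem_filter, Finset.mem_powerset] at hF ⊢
      obtain ⟨hFs, hPF, hFQ⟩ := hF
      intro x hx
      simp only [Finset.mem_sdiff, hR, Finset.mem_union] at hx ⊢
      exact ⟨hFs hx.1, fun h => h.elim hx.2 (fun hq => (Finset.disjoint_left.mp hFQ hx.1) hq)⟩
    · intro T hT
      simp only [Finset.mem_powerset] at hT
      simp only [Finset.mem_filter, Finset.mem_powerset]
      refine ⟨Finset.union_subset (hT.trans (Finset.sdiff_subset)) hP, Finset.subset_union_right, ?_⟩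
      rw [Finset.disjoint_left]
      intro x hx hxQ
      rcases Finset.mem_union.mp hx with h | h
      · have := hT h; rw [hR, Finset.mem_sdiff, Finset.mem_union] at this; exact this.2 (Or.inr hxQ)
      · exact Finset.disjoint_left.mp hPQ h hxQ
    · intro F hF
      simp only [Finset.mem_filter, Finset.mem_powerset] at hF
      exact Finset.sdiff_union_of_subset hF.2.1
    · intro T hT
      simp only [Finset.mem_powerset] at hT
      apply Finset.union_sdiff_cancel_right
      rw [Finset.disjoint_left]
      intro x hx hxP
      have := hT hx; rw [hR, Finset.mem_sdiff, Finset.mem_union] at this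
      exact this.2 (Or.inl hxP)
    · intro F hF
      simp only [Finset.mem_filter, Finset.mem_powerset] at hF
      have : (F \ P).card = F.card - P.card := Finset.card_sdiff_of_subset hF.2.1
      have hle : P.card ≤ F.card := Finset.card_le_card hF.2.1
      congr 2 <;> omega
  rw [key]
  have : ∀ T ∈ R.powerset, q ^ (T.card + P.card) * (1 - q) ^ (s.card - (T.card + P.card))
      = (q ^ P.card * (1 - q) ^ Q.card) * (q ^ T.card * (1 - q) ^ (R.card - T.card)) := by
    intro T hT
    have hTR : T.card ≤ R.card := Finset.card_le_card (Finset.mem_powerset.mp hT)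
    have he : s.card - (T.card + P.card) = (R.card - T.card) + Q.card := by omega
    rw [he, pow_add, pow_add]
    ring
  rw [Finset.sum_congr rfl this, ← Finset.mul_sum, sum_powerset_binom, mul_one]

noncomputable section CountAux

variable {V : Type*} [Fintype V] [DecidableEq V] (G : SimpleGraph V)

/-- reachability within a vertex set -/
def RIn (X : Set V) (u w : V) : Prop :=
  ∃ p : G.Walk u w, ∀ x ∈ p.support, x ∈ X

/-- `S` is a connected set of vertices -/
def ConnSet (S : Finset V) : Prop := ∀ u ∈ S, ∀ w ∈ S, RIn G (↑S) u w

/-- external neighborhood -/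
def extN (S : Finset V) : Finset V :=
  Finset.univ.filter (fun w => w ∉ S ∧ ∃ u ∈ S, G.Adj u w)

lemma walk_stays {S : Finset V} (ω : Finset V) (hdisj : Disjoint ω (extN G S))
    {u w : V} (hu : u ∈ S) (p : G.Walk u w) (hp : ∀ x ∈ p.support, x ∈ ω) : w ∈ S := by
  induction p with
  | nil => exact hu
  | @cons a x c hax q ih =>
    apply ih ?_ (fun y hy => hp y (by simp [hy]))
    by_contra hxS
    have hxω : x ∈ ω := hp x (by simp)
    have : x ∈ extN G S := by
      simp only [extN, Finset.mem_filter, Finset.mem_univ, true_and]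
      exact ⟨hxS, a, hu, hax⟩
    exact (Finset.disjoint_left.mp hdisj hxω) this
  
lemma comp_char {S : Finset V} {v : V} (hv : v ∈ S) (hconn : ConnSet G S)
    (ω : Finset V) (hSω : S ⊆ ω) (hdisj : Disjoint ω (extN G S)) (w : V) :
    RIn G (↑ω) v w ↔ w ∈ S := by
  constructor
  · rintro ⟨p, hp⟩
    exact walk_stays G ω hdisj hv p (fun x hx => by exact_mod_cast hp x hx)
  · intro hw
    obtain ⟨p, hp⟩ := hconn v hv w hw
    exact ⟨p, fun x hx => by exact_mod_cast hSω (by exact_mod_cast hp x hx)⟩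

/-- the connected `k`-sets containing `v` -/
noncomputable def goodSets (G : SimpleGraph V) (v : V) (k : ℕ) : Finset (Finset V) :=
  Finset.univ.powerset.filter (fun S : Finset V => v ∈ S ∧ S.card = k ∧ ConnSet G S)

lemma mem_goodSets {G : SimpleGraph V} {v : V} {k : ℕ} {S : Finset V} :
    S ∈ goodSets G v k ↔ v ∈ S ∧ S.card = k ∧ ConnSet G S := by
  rw [goodSets, Finset.mem_filter]
  constructor
  · rintro ⟨-, h⟩; exact h
  · intro h; exact ⟨Finset.mem_powerset.mpr (Finset.subset_univ _), h⟩

lemma site_sum (v : V) (k : ℕ) (q : ℝ) (hq0 : 0 ≤ q) (hq1 : q ≤ 1) :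
    ∑ S ∈ goodSets G v k,
      q ^ k * (1 - q) ^ ((extN G S).card) ≤ 1 := by
  classical
  set 𝒮 := goodSets G v k with h𝒮
  set fib : Finset V → Finset (Finset V) := fun S =>
    Finset.univ.powerset.filter (fun ω => S ⊆ ω ∧ Disjoint ω (extN G S)) with hfib
  have hconn_of : ∀ S ∈ 𝒮, v ∈ S ∧ S.card = k ∧ ConnSet G S := by
    intro S hS; rw [h𝒮] at hS; exact mem_goodSets.mp hS
  -- each fiber sum equals the weight
  have hfibsum : ∀ S ∈ 𝒮,
      q ^ k * (1 - q) ^ ((extN G S).card)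
        = ∑ ω ∈ fib S, q ^ ω.card * (1 - q) ^ (Fintype.card V - ω.card) := by
    intro S hS
    obtain ⟨hvS, hcard, hconn⟩ := hconn_of S hS
    have hPQ : Disjoint S (extN G S) := by
      rw [Finset.disjoint_left]
      intro x hx hx'
      simp only [extN, Finset.mem_filter] at hx'
      exact hx'.2.1 hx
    have := sum_powerset_filter_binom Finset.univ S (extN G S)
      (Finset.subset_univ _) (Finset.subset_univ _) hPQ q
    rw [hfib]
    simp only [Finset.card_univ] at this ⊢
    rw [← hcard]
    rw [← this]
  rw [Finset.sum_congr rfl hfibsum]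
  -- fibers are pairwise disjoint
  have hdisj : (↑𝒮 : Set (Finset V)).PairwiseDisjoint fib := by
    intro S₁ hS₁ S₂ hS₂ hne
    simp only [Function.onFun, Finset.disjoint_left]
    intro ω hω₁ hω₂
    rw [hfib] at hω₁ hω₂
    simp only [Finset.mem_filter, Finset.mem_powerset] at hω₁ hω₂
    obtain ⟨h1v, h1c, h1conn⟩ := hconn_of S₁ hS₁
    obtain ⟨h2v, h2c, h2conn⟩ := hconn_of S₂ hS₂
    apply hne
    ext w
    rw [← comp_char G h1v h1conn ω hω₁.2.1 hω₁.2.2 w,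
        comp_char G h2v h2conn ω hω₂.2.1 hω₂.2.2 w]
  rw [← Finset.sum_biUnion hdisj]
  calc ∑ ω ∈ 𝒮.biUnion fib, q ^ ω.card * (1 - q) ^ (Fintype.card V - ω.card)
      ≤ ∑ ω ∈ (Finset.univ : Finset V).powerset, q ^ ω.card * (1 - q) ^ (Fintype.card V - ω.card) := by
        apply Finset.sum_le_sum_of_subset_of_nonneg
        · intro ω hω
          rw [Finset.mem_biUnion] at hω
          obtain ⟨S, hS, hωS⟩ := hω
          rw [hfib] at hωS
          exact Finset.mem_powerset.mpr (Finset.subset_univ _)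
        · intro ω _ _
          have h1q : (0:ℝ) ≤ 1 - q := sub_nonneg.mpr hq1
          positivity
    _ = 1 := by
        have := sum_powerset_binom (Finset.univ : Finset V) q
        rwa [Finset.card_univ] at this

lemma internal_nbr {V : Type*} [Fintype V] [DecidableEq V] (G : SimpleGraph V)
    {S : Finset V} (hconn : ConnSet G S) (hcard : 2 ≤ S.card) {u : V} (hu : u ∈ S) :
    ∃ x ∈ S, G.Adj u x := by
  obtain ⟨w, hw, hwu⟩ := Finset.exists_mem_ne (lt_of_lt_of_le one_lt_two hcard) u
  obtain ⟨p, hp⟩ := hconn u hu w hw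
  cases p with
  | nil => exact absurd rfl hwu
  | @cons _ x _ hax q =>
    exact ⟨x, by exact_mod_cast hp x (by simp), hax⟩

lemma extN_card_le {V : Type*} [Fintype V] [DecidableEq V] (G : SimpleGraph V) [DecidableRel G.Adj] {Δ : ℕ}
    (hdeg : ∀ v, G.degree v ≤ Δ) {S : Finset V} (hconn : ConnSet G S) (hcard : 2 ≤ S.card) :
    (extN G S).card ≤ (Δ - 1) * S.card := by
  have hsub : extN G S ⊆ S.biUnion (fun u => G.neighborFinset u \ S) := by
    intro w hw
    simp only [extN, Finset.mem_filter, Finset.mem_univ, true_and] at hw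
    obtain ⟨hwS, u, huS, hadj⟩ := hw
    rw [Finset.mem_biUnion]
    exact ⟨u, huS, by simp [hwS, hadj]⟩
  calc (extN G S).card ≤ (S.biUnion (fun u => G.neighborFinset u \ S)).card :=
        Finset.card_le_card hsub
    _ ≤ ∑ u ∈ S, (G.neighborFinset u \ S).card := Finset.card_biUnion_le
    _ ≤ ∑ u ∈ S, (Δ - 1) := by
        apply Finset.sum_le_sum
        intro u hu
        obtain ⟨x, hxS, hadj⟩ := internal_nbr G hconn hcard hu
        have hx : x ∈ G.neighborFinset u := by simp [hadj]
        have h1 : G.neighborFinset u \ S ⊆ (G.neighborFinset u).erase x := by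
          intro y hy
          rw [Finset.mem_sdiff] at hy
          rw [Finset.mem_erase]
          exact ⟨fun h => hy.2 (h ▸ hxS), hy.1⟩
        have h2 := Finset.card_le_card h1
        rw [Finset.card_erase_of_mem hx] at h2
        have h3 : G.degree u ≤ Δ := hdeg u
        rw [SimpleGraph.degree] at h3
        omega
    _ = (Δ - 1) * S.card := by rw [Finset.sum_const, smul_eq_mul, mul_comm]

lemma count_le {V : Type*} [Fintype V] [DecidableEq V] (G : SimpleGraph V) [DecidableRel G.Adj] {Δ : ℕ}
    (hdeg : ∀ v, G.degree v ≤ Δ) (hΔ : 1 ≤ Δ) (v : V) (k : ℕ) (hk : 1 ≤ k) :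
    (((goodSets G v k)).card : ℝ)
      ≤ (Real.exp 1 * Δ) ^ k := by
  classical
  set 𝒮 := goodSets G v k with h𝒮
  have heΔ1 : (1:ℝ) ≤ Real.exp 1 * Δ := by
    have h1 : (1:ℝ) ≤ Real.exp 1 := by
      have := Real.add_one_le_exp 1; linarith
    have h2 : (1:ℝ) ≤ (Δ:ℝ) := by exact_mod_cast hΔ
    nlinarith
  rcases eq_or_lt_of_le hk with hk1 | hk2
  · -- k = 1
    have : 𝒮 ⊆ {{v}} := by
      intro S hS
      rw [h𝒮] at hS
      obtain ⟨hvS, hcard, _⟩ := mem_goodSets.mp hS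
      rw [Finset.mem_singleton]
      rw [← hk1] at hcard
      obtain ⟨a, ha⟩ := Finset.card_eq_one.mp hcard
      rw [ha] at hvS ⊢
      rw [Finset.mem_singleton] at hvS
      rw [hvS]
    have := Finset.card_le_card this
    simp only [Finset.card_singleton] at this
    calc ((𝒮.card : ℝ)) ≤ 1 := by exact_mod_cast this
      _ ≤ (Real.exp 1 * Δ) ^ k := one_le_pow₀ heΔ1
  · -- k ≥ 2
    have hk2' : 2 ≤ k := hk2
    set q : ℝ := 1 / Δ with hq
    have hΔ0 : (0:ℝ) < Δ := by exact_mod_cast hΔ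
    have hq0 : 0 ≤ q := by positivity
    have hq1 : q ≤ 1 := by
      rw [hq, div_le_one hΔ0]; exact_mod_cast hΔ
    have hsite := site_sum G v k q hq0 hq1
    have hterm : ∀ S ∈ 𝒮, q ^ k * (1 - q) ^ ((Δ - 1) * k) ≤ q ^ k * (1 - q) ^ ((extN G S).card) := by
      intro S hS
      rw [h𝒮] at hS
      obtain ⟨hvS, hcard, hconn⟩ := mem_goodSets.mp hS
      apply mul_le_mul_of_nonneg_left _ (by positivity)
      apply pow_le_pow_of_le_one (by linarith) (by linarith)
      rw [← hcard]
      exact extN_card_le G hdeg hconn (by rw [hcard]; exact hk2')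
    have hmain : (𝒮.card : ℝ) * (q ^ k * (1 - q) ^ ((Δ - 1) * k)) ≤ 1 := by
      calc (𝒮.card : ℝ) * (q ^ k * (1 - q) ^ ((Δ - 1) * k))
          ≤ ∑ S ∈ 𝒮, q ^ k * (1 - q) ^ ((extN G S).card) := by
            rw [← nsmul_eq_mul]
            exact Finset.card_nsmul_le_sum 𝒮 _ _ hterm
        _ ≤ 1 := hsite
    rcases eq_or_lt_of_le hΔ with hΔ1 | hΔ2
    · -- Δ = 1
      cases hΔ1
      have hq' : q = 1 := by rw [hq]; norm_num
      rw [hq'] at hmain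
      norm_num at hmain
      calc (𝒮.card : ℝ) ≤ 1 := by exact_mod_cast hmain
        _ ≤ (Real.exp 1 * (1:ℕ)) ^ k := one_le_pow₀ heΔ1
    · -- Δ ≥ 2
      have hΔ2' : (2:ℕ) ≤ Δ := hΔ2
      have hΔR : (2:ℝ) ≤ (Δ:ℝ) := by exact_mod_cast hΔ2'
      have h1q : 1 - q = ((Δ:ℝ) - 1) / (Δ:ℝ) := by
        rw [hq]; field_simp
      have hd1 : (0:ℝ) < (Δ:ℝ) - 1 := by linarith
      have h1qpos : 0 < 1 - q := by rw [h1q]; positivity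
      have hqpos : 0 < q := by rw [hq]; positivity
      have hmain' : (𝒮.card : ℝ) ≤ (1 / (q * (1-q)^(Δ-1)))^k := by
        rw [div_pow, one_pow, le_div_iff₀ (by positivity)]
        calc (𝒮.card:ℝ) * ((q*(1-q)^(Δ-1))^k)
            = (𝒮.card:ℝ) * (q^k * ((1-q)^(Δ-1))^k) := by rw [mul_pow]
          _ = (𝒮.card:ℝ) * (q^k * (1-q)^((Δ-1)*k)) := by rw [← pow_mul]
          _ ≤ 1 := hmain
      apply hmain'.trans
      apply pow_le_pow_left₀ (by positivity)
      -- 1/(q*(1-q)^(Δ-1)) ≤ e * Δ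
      have e3 : (1:ℝ)/(q*(1-q)^(Δ-1)) = (Δ:ℝ) * (((Δ:ℝ)/((Δ:ℝ)-1))^(Δ-1)) := by
        rw [h1q, hq, div_pow, div_pow]
        rw [one_div, mul_inv, one_div, inv_inv, inv_div]
      rw [e3]
      have hstep : ((Δ:ℝ)/((Δ:ℝ)-1)) ^ (Δ - 1) ≤ Real.exp 1 := by
        have hΔ1cast : ((Δ - 1 : ℕ) : ℝ) = (Δ:ℝ) - 1 := by
          have h1 : (1:ℕ) ≤ Δ := hΔ
          push_cast [Nat.cast_sub h1]
          ring
        have hbase : (Δ:ℝ)/((Δ:ℝ)-1) = 1 + 1/((Δ:ℝ)-1) := by field_simp; ring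
        have hexp : (1 + 1/((Δ:ℝ)-1)) ≤ Real.exp (1/((Δ:ℝ)-1)) := by
          have := Real.add_one_le_exp (1/((Δ:ℝ)-1)); linarith
        calc ((Δ:ℝ)/((Δ:ℝ)-1)) ^ (Δ - 1)
            ≤ (Real.exp (1/((Δ:ℝ)-1))) ^ (Δ - 1) := by
              apply pow_le_pow_left₀ (by positivity) (hbase ▸ hexp)
          _ = Real.exp (((Δ - 1 : ℕ):ℝ) * (1/((Δ:ℝ)-1))) := by
              rw [← Real.exp_nat_mul]
          _ = Real.exp 1 := by
              rw [hΔ1cast]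
              congr 1
              field_simp
      calc (Δ:ℝ) * (((Δ:ℝ)/((Δ:ℝ)-1))^(Δ-1))
          ≤ (Δ:ℝ) * Real.exp 1 := mul_le_mul_of_nonneg_left hstep (by positivity)
        _ = Real.exp 1 * (Δ:ℝ) := mul_comm _ _

end CountAux

lemma mem_support_reachable {V : Type*} {H : SimpleGraph V} {a b : V} (p : H.Walk a b) :
    ∀ x ∈ p.support, H.Reachable a x := by
  induction p with
  | nil => intro x hx; simp at hx; exact hx ▸ SimpleGraph.Reachable.refl _
  | @cons u c w h q ih =>
    intro x hx
    rw [SimpleGraph.Walk.support_cons, List.mem_cons] at hx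
    rcases hx with rfl | hx
    · exact SimpleGraph.Reachable.refl _
    · exact (h.reachable).trans (ih x hx)

section CompExtract

variable {V : Type*} [Fintype V] [DecidableEq V] (G : SimpleGraph V) [DecidableRel G.Adj]

/-- the component of `v` in the configuration `F`, as a finset -/
noncomputable def compSet (F : Finset (Sym2 V)) (v : V) : Finset V :=
  Set.toFinset {w | (SimpleGraph.fromEdgeSet (↑F : Set (Sym2 V))).Reachable v w}

/-- edge boundary as a finset -/
noncomputable def bdryF (S : Finset V) : Finset (Sym2 V) :=
  Set.toFinset (edgeBoundary G (↑S : Set V))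

lemma mem_compSet {F : Finset (Sym2 V)} {v w : V} :
    w ∈ compSet F v ↔ (SimpleGraph.fromEdgeSet (↑F : Set (Sym2 V))).Reachable v w := by
  simp [compSet]

lemma compSet_card (F : Finset (Sym2 V)) (v : V) : (compSet F v).card = compCard F v := by
  rw [compSet, compCard, Set.ncard_eq_toFinset_card']

lemma self_mem_compSet (F : Finset (Sym2 V)) (v : V) : v ∈ compSet F v :=
  mem_compSet.mpr (SimpleGraph.Reachable.refl v)

lemma fromEdgeSet_edges_sub {F : Finset (Sym2 V)} (hF : F ⊆ G.edgeFinset)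
    {a b : V} (p : (SimpleGraph.fromEdgeSet (↑F : Set (Sym2 V))).Walk a b) :
    ∀ e ∈ p.edges, e ∈ G.edgeSet := by
  intro e he
  have h1 := p.edges_subset_edgeSet he
  rw [SimpleGraph.edgeSet_fromEdgeSet] at h1
  have h2 : e ∈ F := h1.1
  have := hF h2
  rwa [SimpleGraph.mem_edgeFinset] at this

lemma compSet_connSet {F : Finset (Sym2 V)} (hF : F ⊆ G.edgeFinset) (v : V) :
    ConnSet G (compSet F v) := by
  intro u hu w hw
  rw [mem_compSet] at hu hw
  set H := SimpleGraph.fromEdgeSet (↑F : Set (Sym2 V)) with hH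
  obtain ⟨p₁⟩ := hu.symm
  obtain ⟨p₂⟩ := hw
  refine ⟨(p₁.append p₂).transfer G (fromEdgeSet_edges_sub G hF _), ?_⟩
  intro x hx
  rw [SimpleGraph.Walk.support_transfer] at hx
  have hreach : H.Reachable u x := mem_support_reachable _ x hx
  have hvx : H.Reachable v x := hu.trans hreach
  have : x ∈ compSet F v := mem_compSet.mpr hvx
  exact_mod_cast this

lemma compSet_disjoint_bdry {F : Finset (Sym2 V)} (hF : F ⊆ G.edgeFinset) (v : V) :
    Disjoint F (bdryF G (compSet F v)) := by
  rw [Finset.disjoint_left]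
  intro e heF heB
  rw [bdryF, Set.mem_toFinset] at heB
  obtain ⟨heG, u, w, rfl, huS, hwS⟩ := heB
  rw [SimpleGraph.mem_edgeSet] at heG
  have hadj : G.Adj u w := heG
  have hne : u ≠ w := hadj.ne
  have hHadj : (SimpleGraph.fromEdgeSet (↑F : Set (Sym2 V))).Adj u w := by
    rw [SimpleGraph.fromEdgeSet_adj]
    exact ⟨by exact_mod_cast heF, hne⟩
  have huS' : u ∈ compSet F v := huS
  rw [mem_compSet] at huS'
  have : w ∈ compSet F v := mem_compSet.mpr (huS'.trans hHadj.reachable)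
  exact hwS this

lemma bdryF_subset (S : Finset V) : bdryF G S ⊆ G.edgeFinset := by
  intro e he
  rw [bdryF, Set.mem_toFinset] at he
  rw [SimpleGraph.mem_edgeFinset]
  exact he.1

lemma bdryF_card (S : Finset V) : ((bdryF G S).card : ℝ) = ((edgeBoundary G (↑S : Set V)).ncard : ℝ) := by
  rw [bdryF, Set.ncard_eq_toFinset_card']

end CompExtract

section PercAux

variable {V : Type*} [Fintype V] [DecidableEq V] (G : SimpleGraph V) [DecidableRel G.Adj]

lemma percProb_union_bound (p : ℝ) (hp0 : 0 ≤ p) (hp1 : p ≤ 1)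
    (𝒜 : Set (Finset (Sym2 V))) {β : Type*} (𝒮 : Finset β) (B : β → Set (Finset (Sym2 V)))
    (hcov : ∀ F ∈ G.edgeFinset.powerset, F ∈ 𝒜 → ∃ S ∈ 𝒮, F ∈ B S) :
    percProb G p 𝒜 ≤ ∑ S ∈ 𝒮, percProb G p (B S) := by
  classical
  have wnn : ∀ F : Finset (Sym2 V), 0 ≤ p ^ F.card * (1-p) ^ (G.edgeFinset.card - F.card) :=
    fun F => mul_nonneg (pow_nonneg hp0 _) (pow_nonneg (by linarith) _)
  have hrw : ∀ S ∈ 𝒮, percProb G p (B S)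
      = ∑ F ∈ G.edgeFinset.powerset,
        if F ∈ B S then p ^ F.card * (1-p) ^ (G.edgeFinset.card - F.card) else 0 :=
    fun S _ => rfl
  rw [percProb, Finset.sum_congr rfl hrw, Finset.sum_comm]
  apply Finset.sum_le_sum
  intro F hF
  by_cases hev : F ∈ 𝒜
  · rw [if_pos hev]
    obtain ⟨S, hS, hdisj⟩ := hcov F hF hev
    have h1 := Finset.single_le_sum
      (f := fun S => if F ∈ B S then p ^ F.card * (1-p) ^ (G.edgeFinset.card - F.card) else 0)
      (fun S _ => by split_ifs with h; exacts [wnn F, le_refl 0]) hS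
    rw [if_pos hdisj] at h1
    exact h1
  · rw [if_neg hev]
    apply Finset.sum_nonneg
    intro S _
    split_ifs with h
    exacts [wnn F, le_refl 0]

lemma percProb_disjoint_eq (p : ℝ) (Q : Finset (Sym2 V)) (hQ : Q ⊆ G.edgeFinset) :
    percProb G p {F | Disjoint F Q} = (1-p) ^ Q.card := by
  classical
  have hbin := sum_powerset_filter_binom G.edgeFinset ∅ Q
    (Finset.empty_subset _) hQ (Finset.disjoint_left.mpr (by simp)) p
  rw [Finset.card_empty, pow_zero, one_mul] at hbin
  rw [percProb, ← hbin]
  rw [Finset.sum_filter]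
  simp only [Set.mem_setOf_eq]
  apply Finset.sum_congr rfl
  intro F hF
  by_cases hcond : Disjoint F Q
  · rw [if_pos hcond, if_pos (⟨Finset.empty_subset _, hcond⟩ : ∅ ⊆ F ∧ Disjoint F Q)]
  · rw [if_neg hcond, if_neg (fun hcc => hcond hcc.2 : ¬(∅ ⊆ F ∧ Disjoint F Q))]

end PercAux

set_option maxHeartbeats 4000000


theorem no_middle_sized_component
    (b : ℝ) (hb : 0 < b) (Δ : ℕ)
    (V : Type) [Fintype V] [DecidableEq V] (G : SimpleGraph V) [DecidableRel G.Adj]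
    (hdeg : ∀ v, G.degree v ≤ Δ)
    (hexp : EdgeExpander G b)
    (A : ℝ) (hA : 0 < A) (hAb : (Δ : ℝ) * Real.exp 1 * A ^ b < 1)
    (c : ℝ) (hc : 0 < c)
    (p : ℝ) (hp : p ∈ Set.Icc (1 - A) 1) :
    percProb G p {F | ∃ v : V, c * Fintype.card V ≤ (compCard F v : ℝ) ∧
        (compCard F v : ℝ) ≤ (Fintype.card V : ℝ) / 2}
      ≤ (1 / c) * ((Δ : ℝ) * Real.exp 1 * A ^ b) ^ (c * Fintype.card V)
          / (1 - (Δ : ℝ) * Real.exp 1 * A ^ b) := by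
  set n := Fintype.card V with hn
  set x : ℝ := (Δ : ℝ) * Real.exp 1 * A ^ b with hx
  have hx1 : x < 1 := hAb
  have hAb0 : (0:ℝ) < A ^ b := Real.rpow_pos_of_pos hA b
  have hx0' : (0:ℝ) ≤ x := by positivity
  have hRHS0 : 0 ≤ (1 / c) * x ^ (c * (n:ℝ)) / (1 - x) := by
    apply div_nonneg
    · exact mul_nonneg (by positivity) (Real.rpow_nonneg hx0' _)
    · linarith
  by_cases hn2 : n < 2
  · -- degenerate case : the event is empty
    have hzero : percProb G p {F | ∃ v : V, c * (n:ℝ) ≤ (compCard F v : ℝ) ∧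
        (compCard F v : ℝ) ≤ (n : ℝ) / 2} = 0 := by
      rw [percProb]
      apply Finset.sum_eq_zero
      intro F hF
      rw [if_neg]
      rintro ⟨v, h1, h2⟩
      have hone : 1 ≤ compCard F v := by
        rw [compCard]
        have hv : v ∈ {w | (SimpleGraph.fromEdgeSet (↑F : Set (Sym2 V))).Reachable v w} :=
          SimpleGraph.Reachable.refl v
        have := (Set.ncard_pos (Set.toFinite _)).mpr ⟨v, hv⟩
        omega
      have hn1 : 1 ≤ n := by
        rw [hn]
        exact Fintype.card_pos_iff.mpr ⟨v⟩
      have hone' : (1:ℝ) ≤ (compCard F v : ℝ) := by exact_mod_cast hone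
      have hnle : (n:ℝ) ≤ 1 := by exact_mod_cast (by omega : n ≤ 1)
      linarith
    rw [hzero]
    exact hRHS0
  push_neg at hn2
  -- now n ≥ 2
  have hV : Nonempty V := Fintype.card_pos_iff.mp (by omega)
  obtain ⟨v₀⟩ := hV
  have hΔ1 : 1 ≤ Δ := by
    by_contra hcon
    have hexp0 := hexp {v₀} (by simp) (by
      rw [Finset.card_singleton]
      have : (2:ℝ) ≤ (n:ℝ) := by exact_mod_cast hn2
      push_cast
      linarith)
    rw [Finset.card_singleton, Nat.cast_one, mul_one] at hexp0
    have hpos : 0 < (edgeBoundary G ((({v₀} : Finset V) : Set V))).ncard := by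
      by_contra hz
      push_neg at hz
      have h0 : ((edgeBoundary G ((({v₀} : Finset V) : Set V))).ncard : ℝ) ≤ 0 := by
        exact_mod_cast hz
      linarith
    have hne : (edgeBoundary G ((({v₀} : Finset V) : Set V))).Nonempty := by
      rcases Set.eq_empty_or_nonempty (edgeBoundary G ((({v₀} : Finset V) : Set V))) with h | h
      · rw [h] at hpos; simp at hpos
      · exact h
    obtain ⟨e, he⟩ := hne
    obtain ⟨heG, u, w, rfl, -, -⟩ := he
    rw [SimpleGraph.mem_edgeSet] at heG
    have hdegpos : 0 < G.degree u := by
      rw [← SimpleGraph.card_neighborFinset_eq_degree]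
      apply Finset.card_pos.mpr
      exact ⟨w, by simp [heG]⟩
    have := hdeg u
    omega
  have hΔR1 : (1:ℝ) ≤ (Δ:ℝ) := by exact_mod_cast hΔ1
  have he1 : (1:ℝ) < Real.exp 1 := by have := Real.add_one_le_exp 1; linarith
  have hA1 : A < 1 := by
    by_contra hcon
    push_neg at hcon
    have h1 : (1:ℝ) ≤ A ^ b := by
      calc (1:ℝ) = (1:ℝ) ^ b := (Real.one_rpow b).symm
        _ ≤ A ^ b := Real.rpow_le_rpow (by norm_num) hcon (le_of_lt hb)
    rw [hx] at hx1
    have h2 : (1:ℝ) ≤ (Δ:ℝ) * Real.exp 1 := by nlinarith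
    have h3 : (1:ℝ) ≤ (Δ:ℝ) * Real.exp 1 * A ^ b := by nlinarith
    linarith
  have hp0 : 0 < p := by have := hp.1; linarith
  have h1p0 : (0:ℝ) ≤ 1 - p := by have := hp.2; linarith
  have h1pA : 1 - p ≤ A := by have := hp.1; linarith
  have hx0 : (0:ℝ) < x := by rw [hx]; positivity
  set y : ℝ := A ^ b with hy
  have hy0 : (0:ℝ) < y := hAb0
  set 𝒮 : Finset (Finset V) := Finset.univ.powerset.filter
    (fun S => (c * (n:ℝ) ≤ (S.card:ℝ)) ∧ ((S.card:ℝ) ≤ (n:ℝ)/2) ∧ S.Nonempty ∧ ConnSet G S)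
    with h𝒮
  have wnn : ∀ F : Finset (Sym2 V), 0 ≤ p ^ F.card * (1-p) ^ (G.edgeFinset.card - F.card) :=
    fun F => mul_nonneg (pow_nonneg hp0.le _) (pow_nonneg h1p0 _)
  -- covering
  have cover : ∀ F ∈ G.edgeFinset.powerset,
      (∃ v : V, c * (n:ℝ) ≤ (compCard F v:ℝ) ∧ (compCard F v:ℝ) ≤ (n:ℝ)/2) →
      ∃ S ∈ 𝒮, Disjoint F (bdryF G S) := by
    rintro F hF ⟨v, h1, h2⟩
    rw [Finset.mem_powerset] at hF
    refine ⟨compSet F v, ?_, compSet_disjoint_bdry G hF v⟩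
    rw [h𝒮, Finset.mem_filter]
    refine ⟨Finset.mem_powerset.mpr (Finset.subset_univ _), ?_, ?_,
      ⟨v, self_mem_compSet F v⟩, compSet_connSet G hF v⟩
    · rw [compSet_card]; exact h1
    · rw [compSet_card]; exact h2
  -- step 1 : union bound
  have step1 : percProb G p {F | ∃ v : V, c * (n:ℝ) ≤ (compCard F v : ℝ) ∧
      (compCard F v : ℝ) ≤ (n : ℝ) / 2}
      ≤ ∑ S ∈ 𝒮, percProb G p {F | Disjoint F (bdryF G S)} := by
    apply percProb_union_bound G p hp0.le hp.2 _ 𝒮 (fun S => {F | Disjoint F (bdryF G S)})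
    intro F hF hev
    exact cover F hF hev
  -- step 2 : evaluate each probability
  have step2 : ∀ S ∈ 𝒮, percProb G p {F | Disjoint F (bdryF G S)}
      = (1-p) ^ (bdryF G S).card := by
    intro S hS
    exact percProb_disjoint_eq G p (bdryF G S) (bdryF_subset G S)
  -- step 3 : each probability small
  have step3 : ∀ S ∈ 𝒮, (1-p:ℝ) ^ (bdryF G S).card ≤ y ^ S.card := by
    intro S hS
    rw [h𝒮, Finset.mem_filter] at hS
    obtain ⟨-, hcn, hhalf, hne, hconn⟩ := hS
    have hScard : 0 < S.card := Finset.card_pos.mpr hne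
    have hbd := hexp S hScard hhalf
    rw [← bdryF_card] at hbd
    have h1 : (1-p)^(bdryF G S).card ≤ A^(bdryF G S).card :=
      pow_le_pow_left₀ h1p0 h1pA _
    have h2 : (A:ℝ)^(bdryF G S).card = A ^ (((bdryF G S).card:ℕ):ℝ) :=
      (Real.rpow_natCast A _).symm
    have h3 : A ^ (((bdryF G S).card:ℕ):ℝ) ≤ A ^ (b * (S.card:ℝ)) :=
      Real.rpow_le_rpow_of_exponent_ge hA hA1.le hbd
    have h4 : A ^ (b * (S.card:ℝ)) = y ^ S.card := by
      rw [hy, ← Real.rpow_natCast (A^b) S.card, ← Real.rpow_mul hA.le]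
    calc (1-p:ℝ) ^ (bdryF G S).card ≤ A^(bdryF G S).card := h1
      _ = A ^ (((bdryF G S).card:ℕ):ℝ) := h2
      _ ≤ A ^ (b * (S.card:ℝ)) := h3
      _ = y ^ S.card := h4
  -- step 4 : counting
  have step4 : ∑ S ∈ 𝒮, y ^ S.card ≤ (1/c) * x ^ (c * (n:ℝ)) / (1 - x) := by
    have hmap : ∀ S ∈ 𝒮, S.card ∈ Finset.range (n+1) := fun S _ =>
      Finset.mem_range.mpr (Nat.lt_succ_of_le (Finset.card_le_univ S))
    rw [← Finset.sum_fiberwise_of_maps_to hmap (fun S => y ^ S.card)]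
    set K := (Finset.range (n+1)).filter
      (fun k => (𝒮.filter (fun S => S.card = k)).Nonempty) with hK
    have hzero : ∀ k ∈ Finset.range (n+1), k ∉ K →
        (∑ S ∈ 𝒮.filter (fun S => S.card = k), y ^ S.card) = 0 := by
      intro k hk hkK
      rw [hK, Finset.mem_filter] at hkK
      push_neg at hkK
      have h := hkK hk
      rw [h, Finset.sum_empty]
    rw [← Finset.sum_subset (Finset.filter_subset _ _) hzero]
    -- constraints for k ∈ K
    have hcons : ∀ k ∈ K, c * (n:ℝ) ≤ (k:ℝ) ∧ k ≤ n ∧ 1 ≤ k := by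
      intro k hk
      rw [hK, Finset.mem_filter] at hk
      obtain ⟨hkr, S₀, hS₀⟩ := hk
      rw [Finset.mem_range] at hkr
      rw [Finset.mem_filter] at hS₀
      obtain ⟨hS₀𝒮, hS₀k⟩ := hS₀
      rw [h𝒮, Finset.mem_filter] at hS₀𝒮
      obtain ⟨-, hcn, hhalf, hne, -⟩ := hS₀𝒮
      rw [hS₀k] at hcn
      refine ⟨hcn, by omega, ?_⟩
      rw [← hS₀k]
      exact Finset.card_pos.mpr hne
    have hkey : ∀ k ∈ K, (∑ S ∈ 𝒮.filter (fun S => S.card = k), y ^ S.card)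
        ≤ (1/c) * x ^ k := by
      intro k hk
      obtain ⟨hcn, hkn, hk1⟩ := hcons k hk
      set fib := 𝒮.filter (fun S => S.card = k) with hfib
      have hsum : ∑ S ∈ fib, y ^ S.card = (fib.card : ℝ) * y ^ k := by
        rw [Finset.sum_congr rfl (fun S hS => by rw [(Finset.mem_filter.mp hS).2]),
          Finset.sum_const, nsmul_eq_mul]
      rw [hsum]
      -- double counting
      have hdc : k * fib.card ≤ ∑ v : V, (goodSets G v k).card := by
        have h1 : ∑ S ∈ fib, S.card = k * fib.card := by
          rw [Finset.sum_congr rfl (fun S hS => (Finset.mem_filter.mp hS).2),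
            Finset.sum_const, smul_eq_mul, mul_comm]
        have h2 : ∑ S ∈ fib, S.card
            = ∑ v : V, ∑ S ∈ fib, (if v ∈ S then 1 else 0) := by
          rw [Finset.sum_comm]
          apply Finset.sum_congr rfl
          intro S hS
          rw [Finset.sum_ite_mem, Finset.univ_inter, Finset.sum_const, smul_eq_mul, mul_one]
        rw [← h1, h2]
        apply Finset.sum_le_sum
        intro v _
        have h3 : ∑ S ∈ fib, (if v ∈ S then 1 else 0)
            = (fib.filter (fun S => v ∈ S)).card := by
          rw [Finset.card_filter]
        rw [h3]
        apply Finset.card_le_card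
        intro S hS
        rw [Finset.mem_filter] at hS
        obtain ⟨hSf, hvS⟩ := hS
        rw [hfib, Finset.mem_filter] at hSf
        obtain ⟨hS𝒮, hSk⟩ := hSf
        rw [h𝒮, Finset.mem_filter] at hS𝒮
        exact mem_goodSets.mpr ⟨hvS, hSk, hS𝒮.2.2.2.2⟩
      have hdcR : (k:ℝ) * (fib.card:ℝ) ≤ (n:ℝ) * (Real.exp 1 * (Δ:ℝ))^k := by
        have hc1 : ((k * fib.card : ℕ) : ℝ)
            ≤ ((∑ v : V, (goodSets G v k).card : ℕ) : ℝ) := by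
          exact_mod_cast hdc
        push_cast at hc1
        calc (k:ℝ) * (fib.card:ℝ) ≤ ∑ v : V, ((goodSets G v k).card : ℝ) := hc1
          _ ≤ ∑ _v : V, (Real.exp 1 * (Δ:ℝ))^k :=
              Finset.sum_le_sum (fun v _ => count_le G hdeg hΔ1 v k hk1)
          _ = (n:ℝ) * (Real.exp 1 * (Δ:ℝ))^k := by
              rw [Finset.sum_const, Finset.card_univ, nsmul_eq_mul, hn]
      have hn0 : (0:ℝ) < (n:ℝ) := by exact_mod_cast Nat.lt_of_lt_of_le Nat.zero_lt_two hn2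
      have hE0 : (0:ℝ) ≤ (Real.exp 1 * (Δ:ℝ))^k := by positivity
      have hN : (fib.card : ℝ) ≤ (1/c) * (Real.exp 1 * (Δ:ℝ))^k := by
        have hfib0 : (0:ℝ) ≤ (fib.card:ℝ) := Nat.cast_nonneg _
        have hstep : (c * (n:ℝ)) * (fib.card:ℝ) ≤ (k:ℝ) * (fib.card:ℝ) :=
          mul_le_mul_of_nonneg_right hcn hfib0
        have h5 : (n:ℝ) * (c * (fib.card:ℝ)) ≤ (n:ℝ) * (Real.exp 1 * (Δ:ℝ))^k := by
          calc (n:ℝ) * (c * (fib.card:ℝ)) = (c * (n:ℝ)) * (fib.card:ℝ) := by ring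
            _ ≤ (k:ℝ) * (fib.card:ℝ) := hstep
            _ ≤ (n:ℝ) * (Real.exp 1 * (Δ:ℝ))^k := hdcR
        have h6 : c * (fib.card:ℝ) ≤ (Real.exp 1 * (Δ:ℝ))^k :=
          le_of_mul_le_mul_left h5 hn0
        rw [one_div, inv_mul_eq_div, le_div_iff₀ hc]
        linarith
      calc (fib.card:ℝ) * y^k ≤ ((1/c) * (Real.exp 1 * (Δ:ℝ))^k) * y^k :=
            mul_le_mul_of_nonneg_right hN (pow_nonneg hy0.le k)
        _ = (1/c) * x^k := by
            rw [hx, hy]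
            ring
    -- geometric series
    set m₀ := ⌈c * (n:ℝ)⌉₊ with hm₀
    have hsub : K ⊆ Finset.Icc m₀ n := by
      intro k hk
      obtain ⟨hcn, hkn, -⟩ := hcons k hk
      rw [Finset.mem_Icc]
      exact ⟨Nat.ceil_le.mpr hcn, hkn⟩
    calc ∑ k ∈ K, (∑ S ∈ 𝒮.filter (fun S => S.card = k), y ^ S.card)
        ≤ ∑ k ∈ K, (1/c) * x^k := Finset.sum_le_sum hkey
      _ ≤ ∑ k ∈ Finset.Icc m₀ n, (1/c) * x^k := by
          apply Finset.sum_le_sum_of_subset_of_nonneg hsub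
          intro k _ _
          positivity
      _ = (1/c) * ∑ k ∈ Finset.Icc m₀ n, x^k := by rw [Finset.mul_sum]
      _ ≤ (1/c) * (x^m₀/(1-x)) := by
          apply mul_le_mul_of_nonneg_left _ (by positivity)
          rw [← Finset.Ico_add_one_right_eq_Icc]
          exact geom_sum_Ico_le_of_lt_one hx0' hx1
      _ ≤ (1/c) * (x ^ (c*(n:ℝ)) / (1-x)) := by
          apply mul_le_mul_of_nonneg_left _ (by positivity)
          apply (div_le_div_iff_of_pos_right (by linarith : (0:ℝ) < 1 - x)).mpr
          calc (x:ℝ)^m₀ = x^((m₀:ℕ):ℝ) := (Real.rpow_natCast x m₀).symm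
            _ ≤ x^(c*(n:ℝ)) := Real.rpow_le_rpow_of_exponent_ge hx0 hx1.le (Nat.le_ceil _)
      _ = (1/c) * x ^ (c*(n:ℝ)) / (1-x) := (mul_div_assoc _ _ _).symm
  calc percProb G p {F | ∃ v : V, c * (n:ℝ) ≤ (compCard F v : ℝ) ∧
      (compCard F v : ℝ) ≤ (n : ℝ) / 2}
      ≤ ∑ S ∈ 𝒮, percProb G p {F | Disjoint F (bdryF G S)} := step1
    _ = ∑ S ∈ 𝒮, (1-p) ^ (bdryF G S).card := Finset.sum_congr rfl step2
    _ ≤ ∑ S ∈ 𝒮, y ^ S.card := Finset.sum_le_sum step3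
    _ ≤ (1/c) * x ^ (c * (n:ℝ)) / (1 - x) := step4



end
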